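/- Fix n and suppose 1 − (D_n^{(2)}/N) Q_n ≠ 0. Then H_{∖n} = H − (D_n^{(2)}/N) x_n x_nᵀ is invertible, x_nᵀ H_{∖n}⁻¹ x_n = Q_n / (1 − (D_n^{(2)}/N) Q_n), and consequently the Newton-step prediction satisfies x_nᵀ θ̂_{NS,∖n} = x_nᵀ θ̂ + (D_n^{(1)}/N) · Q_n / (1 − (D_n^{(2)}/N) Q_n). -/

import Mathlib

open Matrix

lemma aux_mono_deriv_nonneg (g : ℝ → ℝ) (hm : Monotone g) (a : ℝ)
    (hd : DifferentiableAt ℝ g a) : 0 ≤ deriv g a := by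
  have h := hd.hasDerivAt
  rw [hasDerivAt_iff_tendsto_slope] at h
  have h2 : Filter.Tendsto (slope g a) (nhdsWithin a (Set.Ioi a)) (nhds (deriv g a)) :=
    h.mono_left (nhdsWithin_mono a (fun z hz => ne_of_gt hz))
  refine ge_of_tendsto h2 ?_
  filter_upwards [self_mem_nhdsWithin] with z hz
  have hz' : a < z := hz
  have h3 : 0 ≤ g z - g a := sub_nonneg.2 (hm hz'.le)
  rw [slope_def_field]
  exact div_nonneg h3 (by linarith)

lemma aux_second_deriv_nonneg (g : ℝ → ℝ) (hc : ConvexOn ℝ Set.univ g)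
    (hs : ContDiff ℝ 2 g) (a : ℝ) : 0 ≤ iteratedDeriv 2 g a := by
  have hdiff : Differentiable ℝ g := hs.differentiable (by norm_num)
  have hmono : Monotone (deriv g) := by
    have := hc.monotoneOn_deriv (fun z _ => hdiff z)
    exact monotoneOn_univ.mp this
  have hd2 : ContDiff ℝ 1 (deriv g) := by
    exact (contDiff_succ_iff_deriv.mp
      (by exact_mod_cast hs : ContDiff ℝ (((1:ℕ):ℕ∞)+1) g)).2.2
  have : 0 ≤ deriv (deriv g) a :=
    aux_mono_deriv_nonneg _ hmono a ((hd2.differentiable one_ne_zero) a)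
  rwa [iteratedDeriv_succ, iteratedDeriv_one]

lemma aux_sum_mulVec {ι D : Type*} [Fintype D] (s : Finset ι)
    (A : ι → Matrix D D ℝ) (v : D → ℝ) :
    (∑ i ∈ s, A i) *ᵥ v = ∑ i ∈ s, A i *ᵥ v := by
  ext j
  simp only [Matrix.mulVec, dotProduct, Matrix.sum_apply, Finset.sum_apply, Finset.sum_mul]
  rw [Finset.sum_comm]

lemma aux_dot_sum {ι D : Type*} [Fintype D] (s : Finset ι)
    (v : D → ℝ) (w : ι → D → ℝ) :
    v ⬝ᵥ (∑ i ∈ s, w i) = ∑ i ∈ s, v ⬝ᵥ w i := by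
  simp only [dotProduct, Finset.sum_apply, Finset.mul_sum]
  exact Finset.sum_comm

lemma aux_vmv_mulVec {D : ℕ} (u v : Fin D → ℝ) :
    Matrix.vecMulVec u u *ᵥ v = (u ⬝ᵥ v) • u := by
  ext i
  simp [Matrix.mulVec, Matrix.vecMulVec_apply, dotProduct, Finset.mul_sum, mul_comm, mul_assoc, mul_left_comm]

lemma aux_vmv_sandwich {D : ℕ} (u : Fin D → ℝ) (A : Matrix (Fin D) (Fin D) ℝ) :
    Matrix.vecMulVec u u * A * Matrix.vecMulVec u u
      = (u ⬝ᵥ (A *ᵥ u)) • Matrix.vecMulVec u u := by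
  ext i j
  simp only [Matrix.mul_apply, Matrix.vecMulVec_apply, Matrix.smul_apply, Matrix.mulVec,
    dotProduct, smul_eq_mul, Finset.sum_mul, Finset.mul_sum]
  rw [Finset.sum_comm]
  apply Finset.sum_congr rfl
  intro k _
  apply Finset.sum_congr rfl
  intro l _
  ring

theorem stmt_16
    (N D : ℕ) (hN : 1 ≤ N) (hD : 1 ≤ D)
    (x : Fin N → Fin D → ℝ) (y : Fin N → ℝ)
    (lam : ℝ) (hlam : 0 < lam)
    (f : ℝ → ℝ → ℝ)
    (hconv : ∀ c : ℝ, ConvexOn ℝ Set.univ (fun z => f z c))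
    (hsmooth : ∀ c : ℝ, ContDiff ℝ 2 (fun z => f z c))
    (F : (Fin D → ℝ) → ℝ)
    (hF : F = fun θ => (1 / N : ℝ) * ∑ n, f (x n ⬝ᵥ θ) (y n) + lam / 2 * (θ ⬝ᵥ θ))
    (θhat : Fin D → ℝ)
    (hθhat : ∀ θ, F θhat ≤ F θ)
    (hθhatU : ∀ θ, (∀ θ', F θ ≤ F θ') → θ = θhat)
    (D1 : Fin N → ℝ)
    (hD1 : ∀ n, D1 n = deriv (fun z => f z (y n)) (x n ⬝ᵥ θhat))
    (D2 : Fin N → ℝ)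
    (hD2 : ∀ n, D2 n = iteratedDeriv 2 (fun z => f z (y n)) (x n ⬝ᵥ θhat))
    (H : Matrix (Fin D) (Fin D) ℝ)
    (hH : H = (1 / N : ℝ) • ∑ m, D2 m • Matrix.vecMulVec (x m) (x m) + lam • 1)
    (Q : Fin N → ℝ)
    (hQ : ∀ n, Q n = x n ⬝ᵥ (H⁻¹ *ᵥ x n))
    (Hn : Fin N → Matrix (Fin D) (Fin D) ℝ)
    (hHn : ∀ n, Hn n = H - (D2 n / N) • Matrix.vecMulVec (x n) (x n))
    (θNS : Fin N → Fin D → ℝ)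
    (hθNS : ∀ n, θNS n = θhat + (D1 n / N) • ((Hn n)⁻¹ *ᵥ x n)) :
    ∀ n : Fin N, 1 - D2 n / N * Q n ≠ 0 →
      IsUnit (Hn n) ∧
      x n ⬝ᵥ ((Hn n)⁻¹ *ᵥ x n) = Q n / (1 - D2 n / N * Q n) ∧
      x n ⬝ᵥ θNS n = x n ⬝ᵥ θhat + D1 n / N * (Q n / (1 - D2 n / N * Q n)) := by
  intro n hne
  have hD2nn : ∀ m, 0 ≤ D2 m := fun m => by
    rw [hD2]; exact aux_second_deriv_nonneg _ (hconv (y m)) (hsmooth (y m)) _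
  have hNpos : (0:ℝ) < N := by exact_mod_cast hN
  -- H is hermitian
  have hsym : H.IsHermitian := by
    ext i j
    rw [Matrix.conjTranspose_apply, star_trivial, hH]
    simp only [Matrix.add_apply, Matrix.smul_apply, Matrix.sum_apply,
      Matrix.vecMulVec_apply, Matrix.one_apply, smul_eq_mul]
    rw [Finset.mul_sum, Finset.mul_sum]
    congr 1
    · exact Finset.sum_congr rfl fun m _ => by ring
    · by_cases hij : i = j <;> simp [hij, eq_comm]
  -- H is positive definite
  have hpd : H.PosDef := by
    refine Matrix.PosDef.of_dotProduct_mulVec_pos hsym fun v hv => ?_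
    have hstar : star v = v := star_trivial v
    have hcalc : v ⬝ᵥ (H *ᵥ v) =
        (1/N : ℝ) * (∑ m, D2 m * ((x m ⬝ᵥ v) * (x m ⬝ᵥ v))) + lam * (v ⬝ᵥ v) := by
      rw [hH, Matrix.add_mulVec, dotProduct_add, Matrix.smul_mulVec,
        Matrix.smul_mulVec, Matrix.one_mulVec, dotProduct_smul, dotProduct_smul]
      congr 1
      rw [smul_eq_mul]
      congr 1
      rw [aux_sum_mulVec, aux_dot_sum]
      apply Finset.sum_congr rfl
      intro m _
      rw [Matrix.smul_mulVec, dotProduct_smul, aux_vmv_mulVec, dotProduct_smul]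
      simp [mul_comm, dotProduct_comm]
    rw [hstar, hcalc]
    have h1 : 0 ≤ (1/N : ℝ) * (∑ m, D2 m * ((x m ⬝ᵥ v) * (x m ⬝ᵥ v))) := by
      apply mul_nonneg (by positivity)
      exact Finset.sum_nonneg fun m _ => mul_nonneg (hD2nn m) (mul_self_nonneg _)
    have h2 : 0 < lam * (v ⬝ᵥ v) := by
      apply mul_pos hlam
      have := dotProduct_self_eq_zero (v := v)
      rcases lt_or_eq_of_le (Finset.sum_nonneg fun i _ => mul_self_nonneg (v i)) with h | h
      · exact h
      · exact absurd (this.mp h.symm) hv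
    linarith
  have hdet : IsUnit H.det := (Matrix.isUnit_iff_isUnit_det _).mp hpd.isUnit
  have hHinv : H * H⁻¹ = 1 := Matrix.mul_nonsing_inv _ hdet
  set u := x n with hu
  set c := D2 n / N with hc
  set q := Q n with hq
  set V := Matrix.vecMulVec u u with hV
  set k := c / (1 - c * q) with hk
  have hQn : u ⬝ᵥ (H⁻¹ *ᵥ u) = q := (hQ n).symm
  have hVHV : V * H⁻¹ * V = q • V := by
    rw [hV, aux_vmv_sandwich, hQn]
  set B := H⁻¹ + k • (H⁻¹ * V * H⁻¹) with hB
  have hcoef : k - c - k * c * q = 0 := by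
    rw [hk]; field_simp; ring
  have hmulB : Hn n * B = 1 := by
    rw [hHn, hB, ← hu, ← hc, ← hV]
    have e1 : (H - c • V) * (H⁻¹ + k • (H⁻¹ * V * H⁻¹)) =
        H * H⁻¹ + k • (H * (H⁻¹ * (V * H⁻¹))) - c • (V * H⁻¹)
          - (k * c) • (V * (H⁻¹ * (V * H⁻¹))) := by
      simp only [sub_mul, mul_add, Matrix.mul_smul, Matrix.smul_mul, smul_smul,
        Matrix.mul_assoc]
      abel
    have e2 : H * (H⁻¹ * (V * H⁻¹)) = V * H⁻¹ := by
      rw [← Matrix.mul_assoc, hHinv, Matrix.one_mul]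
    have e3 : V * (H⁻¹ * (V * H⁻¹)) = q • (V * H⁻¹) := by
      rw [← Matrix.mul_assoc, ← Matrix.mul_assoc, hVHV, Matrix.smul_mul]
    rw [e1, e2, e3, hHinv, smul_smul]
    have e4 : (1 : Matrix (Fin D) (Fin D) ℝ) + k • (V * H⁻¹) - c • (V * H⁻¹) -
        (k * c * q) • (V * H⁻¹) = 1 + (k - c - k * c * q) • (V * H⁻¹) := by
      rw [sub_smul, sub_smul]; abel
    rw [e4, hcoef, zero_smul, add_zero]
  have hBmul : B * Hn n = 1 := mul_eq_one_comm.mp hmulB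
  have hIsUnit : IsUnit (Hn n) := ⟨⟨Hn n, B, hmulB, hBmul⟩, rfl⟩
  have hinvHn : (Hn n)⁻¹ = B := Matrix.inv_eq_right_inv hmulB
  have hpart2 : u ⬝ᵥ ((Hn n)⁻¹ *ᵥ u) = q / (1 - c * q) := by
    rw [hinvHn, hB, Matrix.add_mulVec, Matrix.smul_mulVec, dotProduct_add,
      dotProduct_smul, hQn]
    have e2 : (H⁻¹ * V * H⁻¹) *ᵥ u = q • (H⁻¹ *ᵥ u) := by
      rw [← Matrix.mulVec_mulVec, ← Matrix.mulVec_mulVec, hV, aux_vmv_mulVec, hQn,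
        Matrix.mulVec_smul]
    rw [e2, dotProduct_smul, hQn, smul_eq_mul, smul_eq_mul, hk]
    have hne' : 1 - q * c ≠ 0 := by rwa [mul_comm q c]
    field_simp
    ring
  refine ⟨hIsUnit, hpart2, ?_⟩
  rw [hθNS, dotProduct_add, dotProduct_smul, hpart2, smul_eq_mul]
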